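/- arXiv:1110.0822 — 2 statements merged into one kernel-verified Lean document; each statement's English description precedes it below -/
import Mathlib

section
/- Let N ≥ 2 and m ≥ 1. Let G_N be the group with presentation on generators g₁, …, g_N and relators R_k = [g_N g_{N−1} ⋯ g_{k+1}, g_k g_{k−1} ⋯ g₁] for k = 1, …, N−1, and let φ_m : G_N → ℤ/mℤ be the homomorphism sending every gᵢ to 1. Then the abelianization of ker φ_m can be generated by 2 + (N−2)·gcd(m, N) elements. -/
open scoped commutatorElement

namespace PencilProof

variable {N m : ℕ} {rels : Set (FreeGroup (Fin N))}

/-- image of first `k` generators product, reversed: `g_{k-1} ⋯ g_0`. -/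
def qq (rels : Set (FreeGroup (Fin N))) (k : ℕ) : PresentedGroup rels :=
  PresentedGroup.mk rels (((List.finRange N).take k).reverse.map FreeGroup.of).prod

def zz (rels : Set (FreeGroup (Fin N))) : PresentedGroup rels :=
  PresentedGroup.mk rels ((List.finRange N).reverse.map FreeGroup.of).prod

theorem relator_eq_one {r : FreeGroup (Fin N)} (hr : r ∈ rels) :
    PresentedGroup.mk rels r = 1 :=
  (QuotientGroup.eq_one_iff r).mpr (Subgroup.subset_normalClosure hr)

theorem zz_eq (k : ℕ) :
    zz rels = PresentedGroup.mk rels (((List.finRange N).drop k).reverse.map FreeGroup.of).prod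
      * qq rels k := by
  rw [qq, zz, ← map_mul, ← List.prod_append, ← List.map_append, ← List.reverse_append,
    List.take_append_drop]

theorem qq_succ (k : ℕ) (hk : k < N) :
    qq rels (k + 1) = PresentedGroup.of ⟨k, hk⟩ * qq rels k := by
  rw [qq, qq, List.take_succ, List.reverse_append, List.map_append, List.prod_append]
  have : (List.finRange N)[k]? = some ⟨k, hk⟩ := by
    simp [List.getElem?_eq_getElem, hk]
  rw [this]
  simp [PresentedGroup.of, mul_comm]

end PencilProof

namespace PencilProof

variable {N m : ℕ} {rels : Set (FreeGroup (Fin N))}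

section central

variable (hrels : rels = { w | ∃ k : ℕ, 1 ≤ k ∧ k ≤ N - 1 ∧
      w = ⁅(((List.finRange N).drop k).reverse.map FreeGroup.of).prod,
           (((List.finRange N).take k).reverse.map FreeGroup.of).prod⁆ })

include hrels

theorem comm_zz_qq : ∀ k ≤ N - 1, Commute (zz rels) (qq rels k) := by
  intro k hk
  rcases Nat.eq_zero_or_pos k with h0 | h0
  · subst h0; simp [qq]
  have hrel : ⁅(((List.finRange N).drop k).reverse.map FreeGroup.of).prod,
      (((List.finRange N).take k).reverse.map FreeGroup.of).prod⁆ ∈ rels := by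
    rw [hrels]; exact ⟨k, h0, hk, rfl⟩
  have h1 := relator_eq_one hrel
  rw [map_commutatorElement, commutatorElement_eq_one_iff_commute] at h1
  have hz := zz_eq (rels := rels) k
  rw [hz]
  have h1' : Commute ((PresentedGroup.mk rels)
      (List.map FreeGroup.of (List.drop k (List.finRange N)).reverse).prod) (qq rels k) := h1
  exact h1'.mul_left (Commute.refl _)

omit hrels in
theorem drop_last (hN : 1 ≤ N) :
    (List.finRange N).drop (N - 1) = [⟨N - 1, by omega⟩] := by
  apply List.ext_getElem
  · simp; omega
  · intro i h1 h2
    simp only [List.getElem_drop, List.getElem_finRange]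
    have : i = 0 := by simp at h2; omega
    subst this
    simp [Fin.ext_iff]

omit hrels in
theorem of_last_eq (hN : 1 ≤ N) :
    (PresentedGroup.of (rels := rels) ⟨N - 1, by omega⟩) = zz rels * (qq rels (N - 1))⁻¹ := by
  rw [zz_eq (N - 1), drop_last hN]
  simp [PresentedGroup.of]

theorem comm_zz_of (hN : 2 ≤ N) (i : Fin N) :
    Commute (zz rels) (PresentedGroup.of (rels := rels) i) := by
  rcases lt_or_ge (i : ℕ) (N - 1) with hi | hi
  · have h1 : Commute (zz rels) (qq rels ((i : ℕ) + 1)) := comm_zz_qq hrels _ (by omega)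
    have h2 : Commute (zz rels) (qq rels (i : ℕ)) := comm_zz_qq hrels _ (by omega)
    have : PresentedGroup.of (rels := rels) i = qq rels ((i : ℕ) + 1) * (qq rels (i : ℕ))⁻¹ := by
      rw [qq_succ _ i.isLt]
      simp
    rw [this]
    exact h1.mul_right h2.inv_right
  · have hlt := i.isLt
    have hi' : i = ⟨N - 1, by omega⟩ := by
      apply Fin.ext; simp only []; omega
    rw [hi', of_last_eq (by omega : 1 ≤ N)]
    exact (Commute.refl _).mul_right (comm_zz_qq hrels (N - 1) le_rfl).inv_right

theorem zz_central (hN : 2 ≤ N) (g : PresentedGroup rels) : Commute (zz rels) g := by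
  have : g ∈ Subgroup.centralizer {zz rels} := by
    apply PresentedGroup.generated_by
    intro j
    rw [Subgroup.mem_centralizer_iff]
    rintro x hx
    rcases hx with rfl
    exact (comm_zz_of hrels hN j).eq
  exact Subgroup.mem_centralizer_iff.mp this (zz rels) rfl

def nu (hrels : rels = { w | ∃ k : ℕ, 1 ≤ k ∧ k ≤ N - 1 ∧
      w = ⁅(((List.finRange N).drop k).reverse.map FreeGroup.of).prod,
           (((List.finRange N).take k).reverse.map FreeGroup.of).prod⁆ }) :
    PresentedGroup rels →* Multiplicative ℤ :=
  PresentedGroup.toGroup (f := fun _ : Fin N => Multiplicative.ofAdd (1 : ℤ)) (by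
    intro r hr
    rw [hrels] at hr
    obtain ⟨k, -, -, rfl⟩ := hr
    rw [map_commutatorElement, commutatorElement_eq_one_iff_commute]
    exact Commute.all _ _)

@[simp] theorem nu_of (i : Fin N) : nu hrels (PresentedGroup.of i) = Multiplicative.ofAdd (1 : ℤ) :=
  PresentedGroup.toGroup.of _

theorem phi_eq (φ : PresentedGroup rels →* Multiplicative (ZMod m))
    (hφ : ∀ i : Fin N, φ (PresentedGroup.of i) = Multiplicative.ofAdd (1 : ZMod m))
    (g : PresentedGroup rels) :
    φ g = Multiplicative.ofAdd ((Multiplicative.toAdd (nu hrels g) : ℤ) : ZMod m) := by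
  have : φ = ((AddMonoidHom.toMultiplicative (Int.castAddHom (ZMod m)))).comp (nu hrels) := by
    ext i
    simp [hφ i]
  rw [this]
  rfl

theorem nu_list (l : List (Fin N)) :
    nu hrels (PresentedGroup.mk rels (l.map FreeGroup.of).prod)
      = Multiplicative.ofAdd (l.length : ℤ) := by
  induction l with
  | nil => simp
  | cons a t ih =>
    simp only [List.map_cons, List.prod_cons, map_mul]
    rw [show PresentedGroup.mk rels (FreeGroup.of a) = PresentedGroup.of a from rfl, nu_of, ih]
    rw [← ofAdd_add]
    congr 1
    simp
    ring

theorem nu_qq (k : ℕ) (hk : k ≤ N) :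
    nu hrels (qq rels k) = Multiplicative.ofAdd (k : ℤ) := by
  rw [qq, show (((List.finRange N).take k).reverse.map FreeGroup.of)
    = (((List.finRange N).take k).reverse).map FreeGroup.of from rfl, nu_list]
  congr 2
  simp [hk]

theorem nu_zz : nu hrels (zz rels) = Multiplicative.ofAdd (N : ℤ) := by
  rw [zz, nu_list]
  simp

section main

def g1 (rels : Set (FreeGroup (Fin N))) (hN : 2 ≤ N) : PresentedGroup rels :=
  PresentedGroup.of ⟨0, by omega⟩

theorem nu_g1 (hN : 2 ≤ N) : nu hrels (g1 rels hN) = Multiplicative.ofAdd (1 : ℤ) := nu_of _ _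

theorem mem_ker_of_nu (φ : PresentedGroup rels →* Multiplicative (ZMod m))
    (hφ : ∀ i : Fin N, φ (PresentedGroup.of i) = Multiplicative.ofAdd (1 : ZMod m))
    (g : PresentedGroup rels)
    (h : ((Multiplicative.toAdd (nu hrels g) : ℤ) : ZMod m) = 0) : g ∈ φ.ker := by
  rw [MonoidHom.mem_ker, phi_eq hrels φ hφ, h]
  rfl

variable (hN : 2 ≤ N) (φ : PresentedGroup rels →* Multiplicative (ZMod m))
  (hφ : ∀ i : Fin N, φ (PresentedGroup.of i) = Multiplicative.ofAdd (1 : ZMod m))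

/-- `x i j = g1^j gᵢ g1^{-(j+1)}` as an element of the kernel. -/
def xK (i : Fin N) (j : ℤ) : φ.ker :=
  ⟨g1 rels hN ^ j * PresentedGroup.of i * g1 rels hN ^ (-(j + 1)),
   mem_ker_of_nu hrels φ hφ _ (by
     simp [map_mul, map_zpow, nu_g1, nu_of, ← ofAdd_zsmul])⟩

/-- `a = g1^m`. -/
def aK : φ.ker :=
  ⟨g1 rels hN ^ (m : ℤ),
   mem_ker_of_nu hrels φ hφ _ (by
     simp [map_zpow, nu_g1, ← ofAdd_zsmul])⟩

/-- `w = z g1^{-N}`. -/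
def wK : φ.ker :=
  ⟨zz rels * g1 rels hN ^ (-(N : ℤ)),
   mem_ker_of_nu hrels φ hφ _ (by
     simp [map_mul, map_zpow, nu_g1, nu_zz, ← ofAdd_zsmul])⟩

/-- `y k j = g1^j (g_{k-1}⋯g_0) g1^{-(j+k)}`. -/
def yK (k : ℕ) (hk : k ≤ N) (j : ℤ) : φ.ker :=
  ⟨g1 rels hN ^ j * qq rels k * g1 rels hN ^ (-(j + (k : ℤ))),
   mem_ker_of_nu hrels φ hφ _ (by
     simp [map_mul, map_zpow, nu_g1, nu_qq hrels k hk, ← ofAdd_zsmul])⟩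

include hN in
theorem zconj (X : PresentedGroup rels) : zz rels * X * (zz rels)⁻¹ = X := by
  rw [(zz_central hrels hN X).eq]; group

theorem xK_shift_m (i : Fin N) (j : ℤ) :
    xK hrels hN φ hφ i (j + m)
      = aK hrels hN φ hφ * xK hrels hN φ hφ i j * (aK hrels hN φ hφ)⁻¹ := by
  apply Subtype.ext
  show g1 rels hN ^ (j + (m : ℤ)) * PresentedGroup.of i * g1 rels hN ^ (-(j + (m : ℤ) + 1))
    = g1 rels hN ^ (m : ℤ) * (g1 rels hN ^ j * PresentedGroup.of i * g1 rels hN ^ (-(j + 1)))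
      * (g1 rels hN ^ (m : ℤ))⁻¹
  group

theorem xK_shift_N (i : Fin N) (j : ℤ) :
    xK hrels hN φ hφ i (j - N)
      = wK hrels hN φ hφ * xK hrels hN φ hφ i j * (wK hrels hN φ hφ)⁻¹ := by
  apply Subtype.ext
  show g1 rels hN ^ (j - (N : ℤ)) * PresentedGroup.of i * g1 rels hN ^ (-(j - (N : ℤ) + 1))
    = (zz rels * g1 rels hN ^ (-(N : ℤ)))
      * (g1 rels hN ^ j * PresentedGroup.of i * g1 rels hN ^ (-(j + 1)))
      * (zz rels * g1 rels hN ^ (-(N : ℤ)))⁻¹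
  have h1 : (zz rels * g1 rels hN ^ (-(N : ℤ)))
      * (g1 rels hN ^ j * PresentedGroup.of i * g1 rels hN ^ (-(j + 1)))
      * (zz rels * g1 rels hN ^ (-(N : ℤ)))⁻¹
    = zz rels * (g1 rels hN ^ (j - (N : ℤ)) * PresentedGroup.of i
        * g1 rels hN ^ (-(j - (N : ℤ) + 1))) * (zz rels)⁻¹ := by group
  rw [h1, zconj hrels hN]

theorem yK_succ (k : ℕ) (hk : k + 1 ≤ N) (j : ℤ) :
    yK hrels hN φ hφ (k + 1) hk j
      = xK hrels hN φ hφ ⟨k, by omega⟩ j * yK hrels hN φ hφ k (by omega) (j + 1) := by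
  apply Subtype.ext
  show g1 rels hN ^ j * qq rels (k + 1) * g1 rels hN ^ (-(j + ((k : ℕ) + 1 : ℕ)))
    = (g1 rels hN ^ j * PresentedGroup.of ⟨k, by omega⟩ * g1 rels hN ^ (-(j + 1)))
      * (g1 rels hN ^ (j + 1) * qq rels k * g1 rels hN ^ (-(j + 1 + (k : ℤ))))
  rw [qq_succ k (by omega)]
  push_cast
  group

theorem xK_last (j : ℤ) :
    xK hrels hN φ hφ ⟨N - 1, by omega⟩ j
      = wK hrels hN φ hφ * (yK hrels hN φ hφ (N - 1) (by omega) (j + 1))⁻¹ := by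
  apply Subtype.ext
  show g1 rels hN ^ j * PresentedGroup.of ⟨N - 1, by omega⟩ * g1 rels hN ^ (-(j + 1))
    = (zz rels * g1 rels hN ^ (-(N : ℤ)))
      * (g1 rels hN ^ (j + 1) * qq rels (N - 1) * g1 rels hN ^ (-(j + 1 + ((N - 1 : ℕ) : ℤ))))⁻¹
  rw [of_last_eq (by omega : 1 ≤ N)]
  have hcast : ((N - 1 : ℕ) : ℤ) = (N : ℤ) - 1 := by
    have : 1 ≤ N := by omega
    push_cast [this]
    ring
  rw [hcast]
  have hzg : Commute (zz rels) (g1 rels hN ^ j) := zz_central hrels hN _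
  have h2 : g1 rels hN ^ j * (zz rels * (qq rels (N - 1))⁻¹) * g1 rels hN ^ (-(j + 1))
      = (g1 rels hN ^ j * zz rels) * ((qq rels (N - 1))⁻¹ * g1 rels hN ^ (-(j + 1))) := by group
  rw [h2, ← hzg.eq]
  group

theorem xK_zero (j : ℤ) : xK hrels hN φ hφ ⟨0, by omega⟩ j = 1 := by
  apply Subtype.ext
  show g1 rels hN ^ j * PresentedGroup.of ⟨0, by omega⟩ * g1 rels hN ^ (-(j + 1)) = 1
  rw [show PresentedGroup.of (rels := rels) ⟨0, by omega⟩ = g1 rels hN from rfl]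
  group

theorem of_eq_xK_mul (i : Fin N) :
    PresentedGroup.of (rels := rels) i = ↑(xK hrels hN φ hφ i 0) * g1 rels hN := by
  show _ = (g1 rels hN ^ (0 : ℤ) * PresentedGroup.of i * g1 rels hN ^ (-(0 + 1))) * g1 rels hN
  group

section Clayer

variable (C : Subgroup (Abelianization (MonoidHom.ker φ)))

omit hrels hN hφ in
theorem ab_conj (a b : MonoidHom.ker φ) :
    Abelianization.of (a * b * a⁻¹) = Abelianization.of b := by
  rw [map_mul, map_mul, map_inv, mul_inv_cancel_comm]

variable (hCx : ∀ i : Fin N, 1 ≤ (i : ℕ) → (i : ℕ) < N - 1 → ∀ j : ℤ,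
    0 ≤ j → j < (Nat.gcd m N : ℤ) → Abelianization.of (xK hrels hN φ hφ i j) ∈ C)
variable (hCa : Abelianization.of (aK hrels hN φ hφ) ∈ C)
variable (hCw : Abelianization.of (wK hrels hN φ hφ) ∈ C)

include hCx hCa hCw in
theorem mem_C_x (hm : 1 ≤ m) (i : Fin N) (h1 : 1 ≤ (i : ℕ)) (h2 : (i : ℕ) < N - 1) (j : ℤ) :
    Abelianization.of (xK hrels hN φ hφ i j) ∈ C := by
  have ex_m : ∀ j : ℤ, Abelianization.of (xK hrels hN φ hφ i (j + m))
      = Abelianization.of (xK hrels hN φ hφ i j) := by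
    intro j; rw [xK_shift_m hrels hN φ hφ, ab_conj]
  have ex_N : ∀ j : ℤ, Abelianization.of (xK hrels hN φ hφ i (j - N))
      = Abelianization.of (xK hrels hN φ hφ i j) := by
    intro j; rw [xK_shift_N hrels hN φ hφ, ab_conj]
  have eqm : ∀ t : ℤ, ∀ j : ℤ, Abelianization.of (xK hrels hN φ hφ i (j + m * t))
      = Abelianization.of (xK hrels hN φ hφ i j) := by
    intro t
    induction t using Int.induction_on with
    | zero => simp
    | succ t ih =>
      intro j
      have : j + (m : ℤ) * (t + 1) = (j + m * t) + m := by ring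
      rw [this, ex_m, ih]
    | pred t ih =>
      intro j
      have h' := ex_m (j + (m : ℤ) * (-t - 1))
      have : j + (m : ℤ) * (-t - 1) + m = j + m * (-t) := by ring
      rw [this, ih] at h'
      have h2' : j + (m : ℤ) * (-(t : ℤ) - 1) = j + m * (-t - 1) := by ring
      rw [← h2'] at h'
      exact h'.symm
  have eqN : ∀ t : ℤ, ∀ j : ℤ, Abelianization.of (xK hrels hN φ hφ i (j + N * t))
      = Abelianization.of (xK hrels hN φ hφ i j) := by
    intro t
    induction t using Int.induction_on with
    | zero => simp
    | succ t ih =>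
      intro j
      have h' := ex_N (j + (N : ℤ) * (t + 1))
      have e1 : j + (N : ℤ) * (t + 1) - N = j + N * t := by ring
      rw [e1, ih] at h'
      rw [← h']
    | pred t ih =>
      intro j
      have e1 : j + (N : ℤ) * (-(t : ℤ) - 1) = (j + N * (-t)) - N := by ring
      rw [e1, ex_N, ih]
  have hdpos : (0 : ℤ) < (Nat.gcd m N : ℤ) := by
    exact_mod_cast Nat.gcd_pos_of_pos_left N hm
  set d : ℤ := (Nat.gcd m N : ℤ) with hdd
  have hb : d = (m : ℤ) * Nat.gcdA m N + (N : ℤ) * Nat.gcdB m N := Nat.gcd_eq_gcd_ab m N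
  have h1' : d * (j / d) + j % d = j := Int.mul_ediv_add_emod j d
  have hj : j = (j % d + (N : ℤ) * (Nat.gcdB m N * (j / d)))
      + (m : ℤ) * (Nat.gcdA m N * (j / d)) := by
    linear_combination -h1' + (j / d) * hb
  have : Abelianization.of (xK hrels hN φ hφ i j)
      = Abelianization.of (xK hrels hN φ hφ i (j % d)) := by
    conv_lhs => rw [hj]
    rw [eqm, eqN]
  rw [this]
  exact hCx i h1 h2 _ (Int.emod_nonneg j hdpos.ne') (Int.emod_lt_of_pos j hdpos)

theorem yK_zero (hk : (0 : ℕ) ≤ N) (j : ℤ) : yK hrels hN φ hφ 0 hk j = 1 := by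
  apply Subtype.ext
  show g1 rels hN ^ j * qq rels 0 * g1 rels hN ^ (-(j + ((0 : ℕ) : ℤ))) = 1
  simp only [qq, List.take_zero, List.reverse_nil, List.map_nil, List.prod_nil, map_one,
    Nat.cast_zero, mul_one]
  group

include hCx hCa hCw in
theorem mem_C_y (hm : 1 ≤ m) :
    ∀ k (hk : k ≤ N) (j : ℤ), k ≤ N - 1 →
      Abelianization.of (yK hrels hN φ hφ k hk j) ∈ C := by
  intro k
  induction k with
  | zero =>
    intro hk j _
    rw [yK_zero hrels hN φ hφ hk j, map_one]
    exact one_mem C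
  | succ k ih =>
    intro hk j hk2
    rw [yK_succ hrels hN φ hφ k hk j, map_mul]
    apply mul_mem
    · rcases Nat.eq_zero_or_pos k with h0 | h0
      · subst h0
        rw [xK_zero hrels hN φ hφ j, map_one]
        exact one_mem C
      · exact mem_C_x hrels hN φ hφ C hCx hCa hCw hm ⟨k, by omega⟩ (by simp only [Fin.val_mk]; omega)
          (by simp only [Fin.val_mk]; omega) j
    · exact ih (by omega) (j + 1) (by omega)

include hCx hCa hCw in
theorem mem_C_xlast (hm : 1 ≤ m) (j : ℤ) :
    Abelianization.of (xK hrels hN φ hφ ⟨N - 1, by omega⟩ j) ∈ C := by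
  rw [xK_last hrels hN φ hφ j, map_mul, map_inv]
  exact mul_mem hCw (inv_mem (mem_C_y hrels hN φ hφ C hCx hCa hCw hm _ _ _ le_rfl))

include hCx hCa hCw in
theorem mem_C_x_all (hm : 1 ≤ m) (i : Fin N) (j : ℤ) :
    Abelianization.of (xK hrels hN φ hφ i j) ∈ C := by
  rcases Nat.eq_zero_or_pos (i : ℕ) with h0 | h0
  · have : i = ⟨0, by omega⟩ := by apply Fin.ext; simpa using h0
    rw [this, xK_zero hrels hN φ hφ j, map_one]
    exact one_mem C
  rcases lt_or_ge (i : ℕ) (N - 1) with hlt | hge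
  · exact mem_C_x hrels hN φ hφ C hCx hCa hCw hm i h0 hlt j
  · have hlt' := i.isLt
    have : i = ⟨N - 1, by omega⟩ := by apply Fin.ext; simp only []; omega
    rw [this]
    exact mem_C_xlast hrels hN φ hφ C hCx hCa hCw hm j

end Clayer

section CCsec

/-- the generating set -/
def SS : Set (Abelianization (MonoidHom.ker φ)) :=
  {Abelianization.of (aK hrels hN φ hφ), Abelianization.of (wK hrels hN φ hφ)} ∪
    {y | ∃ i : Fin N, ∃ j : ℤ, 1 ≤ (i : ℕ) ∧ (i : ℕ) < N - 1 ∧ 0 ≤ j ∧ j < (Nat.gcd m N : ℤ) ∧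
      y = Abelianization.of (xK hrels hN φ hφ i j)}

/-- its closure -/
def CC : Subgroup (Abelianization (MonoidHom.ker φ)) :=
  Subgroup.closure (SS hrels hN φ hφ)

theorem hCa' : Abelianization.of (aK hrels hN φ hφ) ∈ CC hrels hN φ hφ :=
  Subgroup.subset_closure (Or.inl (Or.inl rfl))

theorem hCw' : Abelianization.of (wK hrels hN φ hφ) ∈ CC hrels hN φ hφ :=
  Subgroup.subset_closure (Or.inl (Or.inr rfl))

theorem hCx' : ∀ i : Fin N, 1 ≤ (i : ℕ) → (i : ℕ) < N - 1 → ∀ j : ℤ,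
    0 ≤ j → j < (Nat.gcd m N : ℤ) →
    Abelianization.of (xK hrels hN φ hφ i j) ∈ CC hrels hN φ hφ := by
  intro i h1 h2 j h3 h4
  exact Subgroup.subset_closure (Or.inr ⟨i, j, h1, h2, h3, h4, rfl⟩)

theorem CC_x_all (hm : 1 ≤ m) (i : Fin N) (j : ℤ) :
    Abelianization.of (xK hrels hN φ hφ i j) ∈ CC hrels hN φ hφ :=
  mem_C_x_all hrels hN φ hφ _ (hCx' hrels hN φ hφ) (hCa' hrels hN φ hφ) (hCw' hrels hN φ hφ) hm i j

theorem conj_by_ker (k0 k : MonoidHom.ker φ) :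
    Abelianization.of (MulAut.conjNormal (k0 : PresentedGroup rels) k)
      = Abelianization.of k := by
  have : MulAut.conjNormal (k0 : PresentedGroup rels) k = k0 * k * k0⁻¹ := by
    apply Subtype.ext
    rw [MulAut.conjNormal_apply]
    rfl
  rw [this, ab_conj]

theorem CC_conj_g1 (hm : 1 ≤ m) (k : MonoidHom.ker φ)
    (hk : Abelianization.of k ∈ CC hrels hN φ hφ) :
    Abelianization.of (MulAut.conjNormal (g1 rels hN) k) ∈ CC hrels hN φ hφ := by
  have hmap : ∀ k' : MonoidHom.ker φ, Abelianization.of (MulAut.conjNormal (g1 rels hN) k')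
      = Abelianization.map (MulAut.conjNormal (g1 rels hN)).toMonoidHom (Abelianization.of k') :=
    fun k' => (Abelianization.map_of (MulAut.conjNormal (g1 rels hN)).toMonoidHom k').symm
  rw [hmap]
  refine Subgroup.closure_induction ?_ ?_ ?_ ?_ hk
  rotate_left
  · rw [map_one]; exact one_mem _
  · intro a b _ _ ha hb; rw [map_mul]; exact mul_mem ha hb
  · intro a _ ha; rw [map_inv]; exact inv_mem ha
  · intro y hy
    rcases hy with (rfl | rfl) | ⟨i, j, h1, h2, h3, h4, rfl⟩
    · rw [← hmap]
      have : MulAut.conjNormal (g1 rels hN) (aK hrels hN φ hφ) = aK hrels hN φ hφ := by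
        apply Subtype.ext
        rw [MulAut.conjNormal_apply]
        show g1 rels hN * g1 rels hN ^ (m : ℤ) * (g1 rels hN)⁻¹ = g1 rels hN ^ (m : ℤ)
        group
      rw [this]; exact hCa' hrels hN φ hφ
    · rw [← hmap]
      have : MulAut.conjNormal (g1 rels hN) (wK hrels hN φ hφ) = wK hrels hN φ hφ := by
        apply Subtype.ext
        rw [MulAut.conjNormal_apply]
        show g1 rels hN * (zz rels * g1 rels hN ^ (-(N : ℤ))) * (g1 rels hN)⁻¹
          = zz rels * g1 rels hN ^ (-(N : ℤ))
        have hc : Commute (g1 rels hN) (zz rels) := (zz_central hrels hN _).symm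
        rw [← mul_assoc, hc.eq]
        group
      rw [this]; exact hCw' hrels hN φ hφ
    · rw [← hmap]
      have : MulAut.conjNormal (g1 rels hN) (xK hrels hN φ hφ i j)
          = xK hrels hN φ hφ i (j + 1) := by
        apply Subtype.ext
        rw [MulAut.conjNormal_apply]
        show g1 rels hN * (g1 rels hN ^ j * PresentedGroup.of i * g1 rels hN ^ (-(j + 1)))
            * (g1 rels hN)⁻¹
          = g1 rels hN ^ (j + 1) * PresentedGroup.of i * g1 rels hN ^ (-(j + 1 + 1))
        group
      rw [this]
      exact CC_x_all hrels hN φ hφ hm i (j + 1)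

theorem CC_conj_g1_inv (hm : 1 ≤ m) (k : MonoidHom.ker φ)
    (hk : Abelianization.of k ∈ CC hrels hN φ hφ) :
    Abelianization.of (MulAut.conjNormal (g1 rels hN)⁻¹ k) ∈ CC hrels hN φ hφ := by
  have hmap : ∀ k' : MonoidHom.ker φ, Abelianization.of (MulAut.conjNormal (g1 rels hN)⁻¹ k')
      = Abelianization.map (MulAut.conjNormal (g1 rels hN)⁻¹).toMonoidHom (Abelianization.of k') :=
    fun k' => (Abelianization.map_of (MulAut.conjNormal (g1 rels hN)⁻¹).toMonoidHom k').symm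
  rw [hmap]
  refine Subgroup.closure_induction ?_ ?_ ?_ ?_ hk
  rotate_left
  · rw [map_one]; exact one_mem _
  · intro a b _ _ ha hb; rw [map_mul]; exact mul_mem ha hb
  · intro a _ ha; rw [map_inv]; exact inv_mem ha
  · intro y hy
    rcases hy with (rfl | rfl) | ⟨i, j, h1, h2, h3, h4, rfl⟩
    · rw [← hmap]
      have : MulAut.conjNormal (g1 rels hN)⁻¹ (aK hrels hN φ hφ) = aK hrels hN φ hφ := by
        apply Subtype.ext
        rw [MulAut.conjNormal_apply]
        show (g1 rels hN)⁻¹ * g1 rels hN ^ (m : ℤ) * ((g1 rels hN)⁻¹)⁻¹ = g1 rels hN ^ (m : ℤ)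
        group
      rw [this]; exact hCa' hrels hN φ hφ
    · rw [← hmap]
      have : MulAut.conjNormal (g1 rels hN)⁻¹ (wK hrels hN φ hφ) = wK hrels hN φ hφ := by
        apply Subtype.ext
        rw [MulAut.conjNormal_apply]
        show (g1 rels hN)⁻¹ * (zz rels * g1 rels hN ^ (-(N : ℤ))) * ((g1 rels hN)⁻¹)⁻¹
          = zz rels * g1 rels hN ^ (-(N : ℤ))
        have hc : Commute ((g1 rels hN)⁻¹) (zz rels) := ((zz_central hrels hN _).symm).inv_left
        rw [← mul_assoc, hc.eq]
        group
      rw [this]; exact hCw' hrels hN φ hφ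
    · rw [← hmap]
      have : MulAut.conjNormal (g1 rels hN)⁻¹ (xK hrels hN φ hφ i j)
          = xK hrels hN φ hφ i (j - 1) := by
        apply Subtype.ext
        rw [MulAut.conjNormal_apply]
        show (g1 rels hN)⁻¹ * (g1 rels hN ^ j * PresentedGroup.of i * g1 rels hN ^ (-(j + 1)))
            * ((g1 rels hN)⁻¹)⁻¹
          = g1 rels hN ^ (j - 1) * PresentedGroup.of i * g1 rels hN ^ (-(j - 1 + 1))
        group
      rw [this]
      exact CC_x_all hrels hN φ hφ hm i (j - 1)

theorem CC_conj_all (hm : 1 ≤ m) (g : PresentedGroup rels) (k : MonoidHom.ker φ)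
    (hk : Abelianization.of k ∈ CC hrels hN φ hφ) :
    Abelianization.of (MulAut.conjNormal g k) ∈ CC hrels hN φ hφ := by
  set A : Subgroup (PresentedGroup rels) :=
    { carrier := {g | (∀ k : MonoidHom.ker φ, Abelianization.of k ∈ CC hrels hN φ hφ →
          Abelianization.of (MulAut.conjNormal g k) ∈ CC hrels hN φ hφ)
        ∧ (∀ k : MonoidHom.ker φ, Abelianization.of k ∈ CC hrels hN φ hφ →
          Abelianization.of (MulAut.conjNormal g⁻¹ k) ∈ CC hrels hN φ hφ)}
      one_mem' := by
        constructor <;> intro k hk <;> simp only [inv_one, map_one] <;> exact hk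
      mul_mem' := by
        rintro a b ⟨ha1, ha2⟩ ⟨hb1, hb2⟩
        constructor
        · intro k hk
          rw [map_mul]
          exact ha1 _ (hb1 _ hk)
        · intro k hk
          rw [mul_inv_rev, map_mul]
          exact hb2 _ (ha2 _ hk)
      inv_mem' := by
        rintro a ⟨ha1, ha2⟩
        refine ⟨ha2, ?_⟩
        rw [inv_inv]
        exact ha1 } with hA
  have hall : ∀ g' : PresentedGroup rels, g' ∈ A := by
    apply PresentedGroup.generated_by
    intro i
    have hofi : PresentedGroup.of (rels := rels) i = ↑(xK hrels hN φ hφ i 0) * g1 rels hN :=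
      of_eq_xK_mul hrels hN φ hφ i
    constructor
    · intro k hk
      rw [hofi, map_mul]
      show Abelianization.of
        ((MulAut.conjNormal (↑(xK hrels hN φ hφ i 0) : PresentedGroup rels))
          (MulAut.conjNormal (g1 rels hN) k)) ∈ CC hrels hN φ hφ
      rw [conj_by_ker hrels φ]
      exact CC_conj_g1 hrels hN φ hφ hm k hk
    · intro k hk
      rw [hofi, mul_inv_rev, map_mul]
      show Abelianization.of
        ((MulAut.conjNormal ((g1 rels hN)⁻¹))
          (MulAut.conjNormal ((↑(xK hrels hN φ hφ i 0) : PresentedGroup rels)⁻¹) k))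
          ∈ CC hrels hN φ hφ
      have h1 : Abelianization.of
          ((MulAut.conjNormal ((↑(xK hrels hN φ hφ i 0) : PresentedGroup rels)⁻¹)) k)
          ∈ CC hrels hN φ hφ := by
        have : ((↑(xK hrels hN φ hφ i 0) : PresentedGroup rels)⁻¹)
            = ((xK hrels hN φ hφ i 0)⁻¹ : MonoidHom.ker φ) := rfl
        rw [this, conj_by_ker hrels φ]
        exact hk
      exact CC_conj_g1_inv hrels hN φ hφ hm _ h1
  exact (hall g).1 k hk

def tk (g : PresentedGroup rels) : MonoidHom.ker φ :=
  ⟨g * g1 rels hN ^ (-(Multiplicative.toAdd (nu hrels g))),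
   mem_ker_of_nu hrels φ hφ _ (by
     simp [map_mul, map_zpow, nu_g1, ← ofAdd_zsmul])⟩

theorem tk_of (i : Fin N) : tk hrels hN φ hφ (PresentedGroup.of i) = xK hrels hN φ hφ i 0 := by
  apply Subtype.ext
  show PresentedGroup.of i * g1 rels hN ^ (-(Multiplicative.toAdd (nu hrels (PresentedGroup.of i))))
    = g1 rels hN ^ (0 : ℤ) * PresentedGroup.of i * g1 rels hN ^ (-((0 : ℤ) + 1))
  rw [nu_of]
  show PresentedGroup.of i * g1 rels hN ^ (-(1 : ℤ)) = _
  group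

theorem CC_top (hm : 1 ≤ m) : CC hrels hN φ hφ = ⊤ := by
  set T : Subgroup (PresentedGroup rels) :=
    { carrier := {g | Abelianization.of (tk hrels hN φ hφ g) ∈ CC hrels hN φ hφ}
      one_mem' := by
        have h1 : tk hrels hN φ hφ 1 = 1 := by
          apply Subtype.ext
          show (1 : PresentedGroup rels)
            * g1 rels hN ^ (-(Multiplicative.toAdd (nu hrels 1))) = 1
          rw [map_one]
          simp
        simp only [Set.mem_setOf_eq, h1, map_one]
        exact one_mem _
      mul_mem' := by
        intro a b ha hb
        have key : tk hrels hN φ hφ (a * b)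
            = (MulAut.conjNormal a (tk hrels hN φ hφ b)) * tk hrels hN φ hφ a := by
          apply Subtype.ext
          have h1 : ((MulAut.conjNormal a (tk hrels hN φ hφ b) * tk hrels hN φ hφ a :
                MonoidHom.ker φ) : PresentedGroup rels)
              = (a * ↑(tk hrels hN φ hφ b) * a⁻¹) * ↑(tk hrels hN φ hφ a) := by
            rw [Subgroup.coe_mul, MulAut.conjNormal_apply]
          rw [h1]
          show a * b * g1 rels hN ^ (-(Multiplicative.toAdd (nu hrels (a * b))))
            = (a * (b * g1 rels hN ^ (-(Multiplicative.toAdd (nu hrels b)))) * a⁻¹)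
              * (a * g1 rels hN ^ (-(Multiplicative.toAdd (nu hrels a))))
          rw [map_mul, toAdd_mul]
          group
        rw [Set.mem_setOf_eq, key, map_mul]
        exact mul_mem (CC_conj_all hrels hN φ hφ hm a _ hb) ha
      inv_mem' := by
        intro a ha
        have key : tk hrels hN φ hφ a⁻¹
            = MulAut.conjNormal a⁻¹ ((tk hrels hN φ hφ a)⁻¹) := by
          apply Subtype.ext
          rw [MulAut.conjNormal_apply]
          show a⁻¹ * g1 rels hN ^ (-(Multiplicative.toAdd (nu hrels a⁻¹)))
            = a⁻¹ * (↑(tk hrels hN φ hφ a))⁻¹ * (a⁻¹)⁻¹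
          show _ = a⁻¹
            * (a * g1 rels hN ^ (-(Multiplicative.toAdd (nu hrels a))))⁻¹ * (a⁻¹)⁻¹
          rw [map_inv, toAdd_inv]
          group
        rw [Set.mem_setOf_eq, key]
        exact CC_conj_all hrels hN φ hφ hm _ _ (by rw [map_inv]; exact inv_mem ha) }
  have hT : ∀ g, g ∈ T := by
    apply PresentedGroup.generated_by
    intro i
    show Abelianization.of (tk hrels hN φ hφ (PresentedGroup.of i)) ∈ CC hrels hN φ hφ
    rw [tk_of]
    exact CC_x_all hrels hN φ hφ hm i 0
  rw [eq_top_iff]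
  rintro y -
  refine QuotientGroup.induction_on y ?_
  intro k
  have hk2 : Abelianization.of (tk hrels hN φ hφ ↑k) ∈ CC hrels hN φ hφ := hT ↑k
  haveI : NeZero m := ⟨by omega⟩
  have hker : φ ↑k = 1 := k.2
  rw [phi_eq hrels φ hφ] at hker
  have hker' : ((Multiplicative.toAdd (nu hrels ↑k) : ℤ) : ZMod m) = 0 := by
    have := congrArg Multiplicative.toAdd hker
    simpa using this
  obtain ⟨t, ht⟩ : (m : ℤ) ∣ Multiplicative.toAdd (nu hrels (↑k : PresentedGroup rels)) :=
    (ZMod.intCast_zmod_eq_zero_iff_dvd _ m).mp hker'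
  have key : k = tk hrels hN φ hφ ↑k * (aK hrels hN φ hφ) ^ t := by
    apply Subtype.ext
    rw [Subgroup.coe_mul, SubgroupClass.coe_zpow]
    show (k : PresentedGroup rels)
      = (↑k * g1 rels hN ^ (-(Multiplicative.toAdd (nu hrels ↑k)))) * (g1 rels hN ^ (m : ℤ)) ^ t
    rw [ht]
    group
  show Abelianization.of k ∈ CC hrels hN φ hφ
  rw [key, map_mul, map_zpow]
  exact mul_mem hk2 (zpow_mem (hCa' hrels hN φ hφ) t)

def xKn (i j : ℕ) : MonoidHom.ker φ :=
  if h : i < N then xK hrels hN φ hφ ⟨i, h⟩ (j : ℤ) else 1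

end CCsec

end main


end central

end PencilProof



/-- For the fundamental group `G_N` of the complement of a pencil of `N`
lines (with its Arvola–Randell presentation on generators `g₁, …, g_N`, here `0`-indexed,
with relators `R_k = [g_N ⋯ g_{k+1}, g_k ⋯ g₁]` for `1 ≤ k ≤ N−1`), and
`φ_m : G_N → ℤ/mℤ` sending every generator to `1`, the abelianization of `ker φ_m`
can be generated by `2 + (N−2)·gcd(m, N)` elements. -/
theorem pencil_cyclic_cover_homology_generators_bound
    (N m : ℕ) (hN : 2 ≤ N) (hm : 1 ≤ m)
    (rels : Set (FreeGroup (Fin N)))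
    (hrels : rels = { w | ∃ k : ℕ, 1 ≤ k ∧ k ≤ N - 1 ∧
      w = ⁅(((List.finRange N).drop k).reverse.map FreeGroup.of).prod,
           (((List.finRange N).take k).reverse.map FreeGroup.of).prod⁆ })
    (φ : PresentedGroup rels →* Multiplicative (ZMod m))
    (hφ : ∀ i : Fin N, φ (PresentedGroup.of i) = Multiplicative.ofAdd (1 : ZMod m)) :
    ∃ S : Finset (Abelianization (MonoidHom.ker φ)),
      S.card ≤ 2 + (N - 2) * Nat.gcd m N ∧
      Subgroup.closure (S : Set (Abelianization (MonoidHom.ker φ))) = ⊤ := by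
  classical
  refine ⟨insert (Abelianization.of (PencilProof.aK hrels hN φ hφ))
    (insert (Abelianization.of (PencilProof.wK hrels hN φ hφ))
      (((Finset.Ico 1 (N - 1)) ×ˢ Finset.range (Nat.gcd m N)).image
        fun p => Abelianization.of (PencilProof.xKn hrels hN φ hφ p.1 p.2))), ?_, ?_⟩
  · have h1 := Finset.card_insert_le (Abelianization.of (PencilProof.aK hrels hN φ hφ))
      (insert (Abelianization.of (PencilProof.wK hrels hN φ hφ))
        (((Finset.Ico 1 (N - 1)) ×ˢ Finset.range (Nat.gcd m N)).image
          fun p => Abelianization.of (PencilProof.xKn hrels hN φ hφ p.1 p.2)))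
    have h2 := Finset.card_insert_le (Abelianization.of (PencilProof.wK hrels hN φ hφ))
      (((Finset.Ico 1 (N - 1)) ×ˢ Finset.range (Nat.gcd m N)).image
        fun p => Abelianization.of (PencilProof.xKn hrels hN φ hφ p.1 p.2))
    have h3 := Finset.card_image_le (s := (Finset.Ico 1 (N - 1)) ×ˢ Finset.range (Nat.gcd m N))
      (f := fun p => Abelianization.of (PencilProof.xKn hrels hN φ hφ p.1 p.2))
    have h4 : ((Finset.Ico 1 (N - 1)) ×ˢ Finset.range (Nat.gcd m N)).card
        = (N - 2) * Nat.gcd m N := by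
      rw [Finset.card_product, Nat.card_Ico, Finset.card_range]
      have hnn : N - 1 - 1 = N - 2 := by omega
      rw [hnn]
    rw [h4] at h3
    omega
  · rw [eq_top_iff, ← PencilProof.CC_top hrels hN φ hφ hm]
    have hsub : PencilProof.SS hrels hN φ hφ ⊆
        ↑(insert (Abelianization.of (PencilProof.aK hrels hN φ hφ))
          (insert (Abelianization.of (PencilProof.wK hrels hN φ hφ))
            (((Finset.Ico 1 (N - 1)) ×ˢ Finset.range (Nat.gcd m N)).image
              fun p => Abelianization.of (PencilProof.xKn hrels hN φ hφ p.1 p.2)))) := by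
      rintro y ((rfl | rfl) | ⟨i, j, h1, h2, h3, h4, rfl⟩)
      · simp
      · simp
      · have hx : PencilProof.xKn hrels hN φ hφ (i : ℕ) j.toNat
            = PencilProof.xK hrels hN φ hφ i j := by
          rw [PencilProof.xKn, dif_pos i.isLt]
          rw [Int.toNat_of_nonneg h3, Fin.eta]
        simp only [Finset.coe_insert, Set.mem_insert_iff, Finset.mem_coe, Finset.mem_insert,
          Finset.mem_image, Finset.mem_product, Finset.mem_Ico, Finset.mem_range]
        refine Or.inr (Or.inr ⟨((i : ℕ), j.toNat), ⟨⟨h1, by omega⟩, by omega⟩, ?_⟩)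
        rw [hx]
    exact le_trans (Subgroup.closure_mono hsub) le_rfl
end

section
/- Let d₁, d₂ ≥ 1 and let G be a group generated by elements a₁, …, a_{d₁}, b₁, …, b_{d₂} such that aⱼ bₖ = bₖ aⱼ for all 1 ≤ j ≤ d₁ and 1 ≤ k ≤ d₂. Let N ≥ 1 and let φ : G → ℤ/Nℤ be a group homomorphism with φ(aⱼ) = 1 and φ(bₖ) = 1 for all j, k. Then the abelianization of ker φ can be generated by d₁ + d₂ elements. -/
/-- If `G` is generated by two families `a₁, …, a_{d₁}` and
`b₁, …, b_{d₂}` with every `aⱼ` commuting with every `bₖ`, and `φ : G → ℤ/Nℤ` sends each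
generator to `1`, then the abelianization of `ker φ` can be generated by `d₁ + d₂`
elements. -/
theorem kernel_abelianization_generators_of_commuting_families
    (G : Type) [Group G] (d₁ d₂ N : ℕ) (hd₁ : 1 ≤ d₁) (hd₂ : 1 ≤ d₂) (hN : 1 ≤ N)
    (a : Fin d₁ → G) (b : Fin d₂ → G)
    (hgen : Subgroup.closure (Set.range a ∪ Set.range b) = ⊤)
    (hcomm : ∀ (j : Fin d₁) (k : Fin d₂), a j * b k = b k * a j)
    (φ : G →* Multiplicative (ZMod N))
    (hφa : ∀ j, φ (a j) = Multiplicative.ofAdd (1 : ZMod N))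
    (hφb : ∀ k, φ (b k) = Multiplicative.ofAdd (1 : ZMod N)) :
    ∃ S : Finset (Abelianization (MonoidHom.ker φ)),
      S.card ≤ d₁ + d₂ ∧
      Subgroup.closure (S : Set (Abelianization (MonoidHom.ker φ))) = ⊤ := by
  classical
  haveI : NeZero N := ⟨by omega⟩
  set K := MonoidHom.ker φ with hKdef
  haveI hKnormal : K.Normal := MonoidHom.normal_ker φ
  set j₀ : Fin d₁ := ⟨0, hd₁⟩ with hj₀
  set k₀ : Fin d₂ := ⟨0, hd₂⟩ with hk₀
  set a₁ : G := a j₀ with ha₁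
  set b₁ : G := b k₀ with hb₁
  have hC : ∀ j k, Commute (a j) (b k) := fun j k => hcomm j k
  -- membership in the kernel
  have mem_ab : ∀ j, a j * b₁⁻¹ ∈ K := by
    intro j
    have : φ (a j * b₁⁻¹) = 1 := by
      rw [map_mul, map_inv, hφa, hb₁, hφb, mul_inv_cancel]
    exact this
  have mem_bb : ∀ k, b k * b₁⁻¹ ∈ K := by
    intro k
    have : φ (b k * b₁⁻¹) = 1 := by
      rw [map_mul, map_inv, hφb, hb₁, hφb, mul_inv_cancel]
    exact this
  have mem_ba : b₁ * a₁⁻¹ ∈ K := by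
    have : φ (b₁ * a₁⁻¹) = 1 := by
      rw [map_mul, map_inv, hb₁, hφb, ha₁, hφa, mul_inv_cancel]
    exact this
  have mem_bN : b₁ ^ N ∈ K := by
    have : φ (b₁ ^ N) = 1 := by
      rw [map_pow, hb₁, hφb, ← ofAdd_nsmul, nsmul_eq_mul, mul_one,
        ZMod.natCast_self, ofAdd_zero]
    exact this
  -- the candidate generators
  let g0 : Fin d₁ ⊕ Fin d₂ → G := fun i =>
    match i with
    | Sum.inl j => a j * b₁⁻¹
    | Sum.inr k => if k = k₀ then b₁ ^ N else b k * b₁⁻¹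
  have hg0 : ∀ i, g0 i ∈ K := by
    rintro (j | k)
    · exact mem_ab j
    · by_cases h : k = k₀
      · simpa [g0, h] using mem_bN
      · simpa [g0, h] using mem_bb k
  let e : Fin d₁ ⊕ Fin d₂ → K := fun i => ⟨g0 i, hg0 i⟩
  set H : Subgroup (Abelianization K) :=
    Subgroup.closure (Set.range fun i => Abelianization.of (e i)) with hH
  -- conjugation in the abelianization is trivial
  have conj_of : ∀ t m : K, Abelianization.of (t * m * t⁻¹) = Abelianization.of m := by
    intro t m
    rw [map_mul, map_mul, map_inv, mul_comm (Abelianization.of t) (Abelianization.of m),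
      mul_assoc, mul_inv_cancel, mul_one]
  -- the subgroup M of G
  set M : Subgroup G := (H.comap (Abelianization.of : K →* Abelianization K)).map K.subtype
    with hM
  have memM : ∀ (x : G) (hx : x ∈ K),
      (x ∈ M ↔ Abelianization.of (⟨x, hx⟩ : K) ∈ H) := by
    intro x hx
    constructor
    · rintro ⟨y, hy, hyx⟩
      have : (⟨x, hx⟩ : K) = y := Subtype.ext hyx.symm
      rw [this]; exact hy
    · intro h
      exact ⟨⟨x, hx⟩, h, rfl⟩
  have hMK : ∀ x ∈ M, x ∈ K := by
    rintro x ⟨y, -, rfl⟩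
    exact y.2
  have hgenM : ∀ i, g0 i ∈ M := fun i =>
    (memM _ (hg0 i)).mpr (Subgroup.subset_closure ⟨i, rfl⟩)
  -- conjugation by kernel elements preserves M
  have conjK : ∀ t, t ∈ K → ∀ m ∈ M, t * m * t⁻¹ ∈ M := by
    intro t ht m hm
    have hmK := hMK m hm
    have h1 : t * m * t⁻¹ ∈ K := mul_mem (mul_mem ht hmK) (inv_mem ht)
    rw [memM _ h1]
    have e1 : (⟨t * m * t⁻¹, h1⟩ : K) = ⟨t, ht⟩ * ⟨m, hmK⟩ * (⟨t, ht⟩ : K)⁻¹ := rfl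
    rw [e1, conj_of]
    exact (memM m hmK).mp hm
  -- conjugation by any u which conjugates the generators into M preserves M
  have conjB : ∀ u : G, (∀ i, u * g0 i * u⁻¹ ∈ M) → ∀ m ∈ M, u * m * u⁻¹ ∈ M := by
    intro u hu m hm
    have hmK := hMK m hm
    have h1 : u * m * u⁻¹ ∈ K := hKnormal.conj_mem m hmK u
    rw [memM _ h1]
    have e1 : (⟨u * m * u⁻¹, h1⟩ : K) = (MulAut.conjNormal u).toMonoidHom ⟨m, hmK⟩ :=
      Subtype.ext (MulAut.conjNormal_apply u ⟨m, hmK⟩).symm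
    rw [e1, ← Abelianization.map_of]
    have hle : H.map (Abelianization.map (MulAut.conjNormal u).toMonoidHom) ≤ H := by
      rw [hH, MonoidHom.map_closure]
      refine (Subgroup.closure_le _).mpr ?_
      rintro x ⟨_, ⟨i, rfl⟩, rfl⟩
      rw [Abelianization.map_of]
      have h2 : u * g0 i * u⁻¹ ∈ K := hKnormal.conj_mem _ (hg0 i) u
      have e2 : (MulAut.conjNormal u).toMonoidHom (e i) = ⟨u * g0 i * u⁻¹, h2⟩ :=
        Subtype.ext (MulAut.conjNormal_apply u (e i))
      rw [e2]
      exact (memM _ h2).mp (hu i)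
    exact hle ⟨Abelianization.of ⟨m, hmK⟩, (memM m hmK).mp hm, rfl⟩
  -- basic conjugation computations
  have conj_eq : ∀ x y : G, Commute x y → y * x * y⁻¹ = x := by
    intro x y h
    rw [← h.eq, mul_inv_cancel_right]
  have key3 : ∀ u : G, Commute a₁ u →
      b₁ * u * b₁⁻¹ = (b₁ * a₁⁻¹) * u * (b₁ * a₁⁻¹)⁻¹ := by
    intro u hu
    have h1 : a₁⁻¹ * u * a₁ = u := by
      rw [hu.inv_left.eq, mul_assoc, inv_mul_cancel, mul_one]
    calc b₁ * u * b₁⁻¹ = b₁ * (a₁⁻¹ * u * a₁) * b₁⁻¹ := by rw [h1]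
      _ = (b₁ * a₁⁻¹) * u * (b₁ * a₁⁻¹)⁻¹ := by group
  have key3' : ∀ u : G, Commute a₁ u →
      b₁⁻¹ * u * (b₁⁻¹)⁻¹ = (b₁⁻¹ * a₁) * u * (b₁⁻¹ * a₁)⁻¹ := by
    intro u hu
    have h1 : a₁ * u * a₁⁻¹ = u := by
      rw [hu.eq, mul_assoc, mul_inv_cancel, mul_one]
    calc b₁⁻¹ * u * (b₁⁻¹)⁻¹ = b₁⁻¹ * (a₁ * u * a₁⁻¹) * (b₁⁻¹)⁻¹ := by rw [h1]
      _ = (b₁⁻¹ * a₁) * u * (b₁⁻¹ * a₁)⁻¹ := by group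
  have mem_ba' : b₁⁻¹ * a₁ ∈ K := by
    have : φ (b₁⁻¹ * a₁) = 1 := by
      rw [map_mul, map_inv, hb₁, hφb, ha₁, hφa, inv_mul_cancel]
    exact this
  -- conjugation by b₁ and b₁⁻¹ preserves M
  have hM_b₁ : ∀ m ∈ M, b₁ * m * b₁⁻¹ ∈ M := by
    refine conjB b₁ ?_
    rintro (j | k)
    · have : b₁ * g0 (Sum.inl j) * b₁⁻¹ = g0 (Sum.inl j) :=
        conj_eq _ _ ((hC j k₀).mul_left (Commute.refl b₁).inv_left)
      rw [this]; exact hgenM (Sum.inl j)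
    · by_cases h : k = k₀
      · have hg : g0 (Sum.inr k) = b₁ ^ N := by simp [g0, h]
        rw [hg, conj_eq _ _ ((Commute.refl b₁).pow_left N)]
        simpa [g0, h] using hgenM (Sum.inr k)
      · have hg : g0 (Sum.inr k) = b k * b₁⁻¹ := by simp [g0, h]
        rw [hg, key3 _ ((hC j₀ k).mul_right (hC j₀ k₀).inv_right)]
        exact conjK _ mem_ba _ (by rw [← hg]; exact hgenM (Sum.inr k))
  have hM_b₁' : ∀ m ∈ M, b₁⁻¹ * m * (b₁⁻¹)⁻¹ ∈ M := by
    refine conjB b₁⁻¹ ?_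
    rintro (j | k)
    · have : b₁⁻¹ * g0 (Sum.inl j) * (b₁⁻¹)⁻¹ = g0 (Sum.inl j) :=
        conj_eq _ _ (((hC j k₀).mul_left (Commute.refl b₁).inv_left).inv_right)
      rw [this]; exact hgenM (Sum.inl j)
    · by_cases h : k = k₀
      · have hg : g0 (Sum.inr k) = b₁ ^ N := by simp [g0, h]
        rw [hg, conj_eq _ _ ((Commute.refl b₁).pow_left N).inv_right]
        simpa [g0, h] using hgenM (Sum.inr k)
      · have hg : g0 (Sum.inr k) = b k * b₁⁻¹ := by simp [g0, h]
        rw [hg, key3' _ ((hC j₀ k).mul_right (hC j₀ k₀).inv_right)]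
        exact conjK _ mem_ba' _ (by rw [← hg]; exact hgenM (Sum.inr k))
  -- conjugation is multiplicative
  have Pmul : ∀ u v : G, (∀ m ∈ M, u * m * u⁻¹ ∈ M) → (∀ m ∈ M, v * m * v⁻¹ ∈ M) →
      ∀ m ∈ M, (u * v) * m * (u * v)⁻¹ ∈ M := by
    intro u v hu hv m hm
    have : (u * v) * m * (u * v)⁻¹ = u * (v * m * v⁻¹) * u⁻¹ := by group
    rw [this]
    exact hu _ (hv _ hm)
  -- M is normal
  have Pall : ∀ g : G, ∀ m ∈ M, g * m * g⁻¹ ∈ M := by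
    have base : ∀ x ∈ Set.range a ∪ Set.range b,
        (∀ m ∈ M, x * m * x⁻¹ ∈ M) ∧ (∀ m ∈ M, x⁻¹ * m * (x⁻¹)⁻¹ ∈ M) := by
      rintro x (⟨j, rfl⟩ | ⟨k, rfl⟩)
      · constructor
        · intro m hm
          have hx : a j = (a j * b₁⁻¹) * b₁ := by rw [inv_mul_cancel_right]
          rw [hx]
          exact Pmul _ _ (conjK _ (mem_ab j)) hM_b₁ m hm
        · intro m hm
          have hx : (a j)⁻¹ = b₁⁻¹ * (a j * b₁⁻¹)⁻¹ := by group
          rw [hx]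
          exact Pmul _ _ hM_b₁' (conjK _ (inv_mem (mem_ab j))) m hm
      · constructor
        · intro m hm
          have hbk : b k * b₁⁻¹ ∈ K := mem_bb k
          have hx : b k = (b k * b₁⁻¹) * b₁ := by rw [inv_mul_cancel_right]
          rw [hx]
          exact Pmul _ _ (conjK _ hbk) hM_b₁ m hm
        · intro m hm
          have hx : (b k)⁻¹ = b₁⁻¹ * (b k * b₁⁻¹)⁻¹ := by group
          rw [hx]
          exact Pmul _ _ hM_b₁' (conjK _ (inv_mem (mem_bb k))) m hm
    intro g
    have hg : g ∈ Subgroup.closure (Set.range a ∪ Set.range b) := by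
      rw [hgen]; exact Subgroup.mem_top g
    refine (Subgroup.closure_induction
      (p := fun x _ => (∀ m ∈ M, x * m * x⁻¹ ∈ M) ∧ (∀ m ∈ M, x⁻¹ * m * (x⁻¹)⁻¹ ∈ M))
      (fun x hx => base x hx) ?_ ?_ ?_ hg).1
    · constructor <;> intro m hm <;> simpa using hm
    · intro x y _ _ hx hy
      constructor
      · exact Pmul _ _ hx.1 hy.1
      · intro m hm
        have : (x * y)⁻¹ = y⁻¹ * x⁻¹ := by rw [mul_inv_rev]
        rw [this]
        exact Pmul _ _ hy.2 hx.2 m hm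
    · intro x _ hx
      refine ⟨hx.2, ?_⟩
      intro m hm
      simpa using hx.1 m hm
  haveI hMnormal : M.Normal := ⟨fun m hm g => Pall g m hm⟩
  -- the quotient map
  set Q : G →* G ⧸ M := QuotientGroup.mk' M with hQ
  set bb : G ⧸ M := Q b₁ with hbb
  have hbN_M : b₁ ^ N ∈ M := by simpa [g0] using hgenM (Sum.inr k₀)
  have hbbN : bb ^ N = 1 := by
    rw [hbb, hQ, ← map_pow]
    exact (QuotientGroup.eq_one_iff _).mpr hbN_M
  have hpow : ∀ n : ℕ, bb ^ ((n : ZMod N)).val = bb ^ n := by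
    intro n
    rw [ZMod.val_natCast]
    exact (pow_eq_pow_mod n hbbN).symm
  have hvadd : ∀ x y : ZMod N, bb ^ (x + y).val = bb ^ x.val * bb ^ y.val := by
    intro x y
    have h1 : ((x.val + y.val : ℕ) : ZMod N) = x + y := by
      push_cast
      rw [ZMod.natCast_rightInverse x, ZMod.natCast_rightInverse y]
    calc bb ^ (x + y).val = bb ^ (((x.val + y.val : ℕ) : ZMod N)).val := by rw [h1]
      _ = bb ^ (x.val + y.val) := hpow _
      _ = bb ^ x.val * bb ^ y.val := pow_add _ _ _
  -- Q of a generator is bb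
  have hQa : ∀ j, Q (a j) = bb := by
    intro j
    have h1 : Q (a j * b₁⁻¹) = 1 := (QuotientGroup.eq_one_iff _).mpr (hgenM (Sum.inl j))
    calc Q (a j) = Q ((a j * b₁⁻¹) * b₁) := by rw [inv_mul_cancel_right]
      _ = Q (a j * b₁⁻¹) * Q b₁ := map_mul _ _ _
      _ = bb := by rw [h1, one_mul, hbb]
  have hQb : ∀ k, Q (b k) = bb := by
    intro k
    have hmem : b k * b₁⁻¹ ∈ M := by
      by_cases h : k = k₀
      · subst h; rw [mul_inv_cancel]; exact one_mem M
      · simpa [g0, h] using hgenM (Sum.inr k)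
    have h1 : Q (b k * b₁⁻¹) = 1 := (QuotientGroup.eq_one_iff _).mpr hmem
    calc Q (b k) = Q ((b k * b₁⁻¹) * b₁) := by rw [inv_mul_cancel_right]
      _ = Q (b k * b₁⁻¹) * Q b₁ := map_mul _ _ _
      _ = bb := by rw [h1, one_mul, hbb]
  -- main computation : Q g = bb ^ val (φ g)
  have hone : bb ^ ((1 : ZMod N)).val = bb := by
    rw [show (1 : ZMod N) = ((1 : ℕ) : ZMod N) by rw [Nat.cast_one], hpow, pow_one]
  have main : ∀ g : G, Q g = bb ^ (Multiplicative.toAdd (φ g)).val := by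
    intro g
    have hg : g ∈ Subgroup.closure (Set.range a ∪ Set.range b) := by
      rw [hgen]; exact Subgroup.mem_top g
    refine Subgroup.closure_induction
      (p := fun x _ => Q x = bb ^ (Multiplicative.toAdd (φ x)).val) ?_ ?_ ?_ ?_ hg
    · rintro x (⟨j, rfl⟩ | ⟨k, rfl⟩)
      · rw [hφa j, toAdd_ofAdd, hone, hQa]
      · rw [hφb k, toAdd_ofAdd, hone, hQb]
    · simp
    · intro x y _ _ hx hy
      rw [map_mul, hx, hy, ← hvadd, map_mul, toAdd_mul]
    · intro x _ hx
      rw [map_inv, hx, map_inv, toAdd_inv]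
      refine (eq_inv_of_mul_eq_one_left ?_).symm
      rw [← hvadd, neg_add_cancel, ZMod.val_zero, pow_zero]
  -- the kernel is contained in M
  have hKM : ∀ x, x ∈ K → x ∈ M := by
    intro x hx
    have h0 : φ x = 1 := hx
    have h1 := main x
    rw [h0, toAdd_one, ZMod.val_zero, pow_zero] at h1
    exact (QuotientGroup.eq_one_iff x).mp h1
  -- conclusion
  refine ⟨Finset.image (fun i => Abelianization.of (e i)) Finset.univ, ?_, ?_⟩
  · refine Finset.card_image_le.trans ?_
    simp
  · rw [Finset.coe_image, Finset.coe_univ, Set.image_univ, ← hH]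
    rw [Subgroup.eq_top_iff']
    intro x
    refine QuotientGroup.induction_on x ?_
    intro k
    have hk : (k : G) ∈ K := k.2
    have := (memM _ hk).mp (hKM _ hk)
    have hkk : (⟨(k : G), hk⟩ : K) = k := Subtype.ext rfl
    rw [hkk] at this
    exact this
end
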